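/- (Lemma 1, control function.) Under the conditioned measure μ' (the subpopulation of workers, H > 0), the unobservable E is conditionally independent of the covariates (X,Z) given U: CondIndepFun holds under μ' for E and ⟨X,Z⟩ with respect to the σ-algebra generated by U. (Since the control function V := F_{H|X,Z}(H|X,Z) equals U a.s. on {H>0}, this states that V is a control function for E conditional on H > 0.) -/

import Mathlib

open MeasureTheory ProbabilityTheory

/-- Key Fubini-type identity: if `XZ` is independent of `EU`, then integrating out `XZ`
against an indicator of `B` intersected with a "section condition" `K` yields the weight
function `u ↦ ν (B-section of K at u)`. -/
lemma key_int {Ω : Type*} [MeasurableSpace Ω] (μ : Measure Ω) [IsProbabilityMeasure μ]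
    {P Q : Type*} [MeasurableSpace P] [MeasurableSpace Q]
    (XZ : Ω → P) (EU : Ω → Q) (hXZ : Measurable XZ) (hEU : Measurable EU)
    (hmap : μ.map (fun ω => (XZ ω, EU ω)) = (μ.map XZ).prod (μ.map EU))
    (K : Set (P × ℝ)) (hK : MeasurableSet K) (uu : Q → ℝ) (huu : Measurable uu)
    (B : Set P) (hB : MeasurableSet B)
    (F : Q → ℝ) (hF : Measurable F) (hFb : ∀ q, ‖F q‖ ≤ 1) :
    ∫ ω, B.indicator 1 (XZ ω) * K.indicator 1 (XZ ω, uu (EU ω)) * F (EU ω) ∂μ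
      = ∫ ω, ((μ.map XZ) ((fun p => (p, uu (EU ω))) ⁻¹' ((B ×ˢ Set.univ) ∩ K))).toReal
          * F (EU ω) ∂μ := by
  set ν := μ.map XZ with hν
  set ρ := μ.map EU with hρ
  haveI : IsProbabilityMeasure ν := Measure.isProbabilityMeasure_map hXZ.aemeasurable
  haveI : IsProbabilityMeasure ρ := Measure.isProbabilityMeasure_map hEU.aemeasurable
  set G : P × Q → ℝ := fun r => B.indicator 1 r.1 * K.indicator 1 (r.1, uu r.2) * F r.2 with hG
  have hGmeas : Measurable G := by
    refine (((measurable_one.indicator hB).comp measurable_fst).mul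
      ((measurable_one.indicator hK).comp
        (measurable_fst.prodMk (huu.comp measurable_snd)))).mul (hF.comp measurable_snd)
  have hindb : ∀ {γ : Type} {s : Set γ} (x : γ), ‖s.indicator (1 : γ → ℝ) x‖ ≤ 1 := by
    intro γ s x
    by_cases h : x ∈ s <;> simp [Set.indicator_apply, h]
  have hGb : ∀ r, ‖G r‖ ≤ 1 := by
    intro r
    have h1 : ‖B.indicator (1 : P → ℝ) r.1‖ ≤ 1 := by
      by_cases h : r.1 ∈ B <;> simp [Set.indicator_apply, h]
    have h2 : ‖K.indicator (1 : (P × ℝ) → ℝ) (r.1, uu r.2)‖ ≤ 1 := by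
      by_cases h : (r.1, uu r.2) ∈ K <;> simp [Set.indicator_apply, h]
    calc ‖G r‖ ≤ ‖B.indicator 1 r.1 * K.indicator 1 (r.1, uu r.2)‖ * ‖F r.2‖ := by
            rw [hG]; exact (norm_mul_le _ _)
      _ ≤ 1 * 1 := by
            refine mul_le_mul ?_ (hFb r.2) (norm_nonneg _) zero_le_one
            calc ‖B.indicator 1 r.1 * K.indicator 1 (r.1, uu r.2)‖
                ≤ ‖B.indicator (1 : P → ℝ) r.1‖ * ‖K.indicator (1 : (P×ℝ) → ℝ) (r.1, uu r.2)‖ :=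
                  norm_mul_le _ _
              _ ≤ 1 * 1 := mul_le_mul h1 h2 (norm_nonneg _) zero_le_one
              _ = 1 := one_mul 1
      _ = 1 := one_mul 1
  have hGint : Integrable G (ν.prod ρ) :=
    ⟨hGmeas.aestronglyMeasurable, HasFiniteIntegral.of_bounded (C := 1) (Filter.Eventually.of_forall hGb)⟩
  have step1 : ∫ ω, B.indicator 1 (XZ ω) * K.indicator 1 (XZ ω, uu (EU ω)) * F (EU ω) ∂μ
      = ∫ r, G r ∂(ν.prod ρ) := by
    rw [← hmap, integral_map (hXZ.prodMk hEU).aemeasurable hGmeas.aestronglyMeasurable]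
  have step2 : ∫ r, G r ∂(ν.prod ρ) = ∫ q, (∫ p, G (p, q) ∂ν) ∂ρ :=
    integral_prod_symm G hGint
  have inner : ∀ q, (∫ p, G (p, q) ∂ν)
      = (ν ((fun p => (p, uu q)) ⁻¹' ((B ×ˢ Set.univ) ∩ K))).toReal * F q := by
    intro q
    have hset : MeasurableSet ((fun p => (p, uu q)) ⁻¹' ((B ×ˢ Set.univ) ∩ K)) :=
      (measurable_id.prodMk measurable_const) ((hB.prod MeasurableSet.univ).inter hK)
    have hpt : ∀ p, G (p, q)
        = ((fun p => (p, uu q)) ⁻¹' ((B ×ˢ Set.univ) ∩ K)).indicator (1 : P → ℝ) p * F q := by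
      intro p
      by_cases h1 : p ∈ B <;> by_cases h2 : (p, uu q) ∈ K <;>
        simp [hG, Set.indicator_apply, h1, h2]
    simp_rw [hpt]
    rw [integral_mul_const, integral_indicator_one hset]
    rfl
  have step3 : ∫ q, (∫ p, G (p, q) ∂ν) ∂ρ
      = ∫ ω, (ν ((fun p => (p, uu (EU ω))) ⁻¹' ((B ×ˢ Set.univ) ∩ K))).toReal * F (EU ω) ∂μ := by
    simp_rw [inner]
    rw [hρ, integral_map hEU.aemeasurable]
    refine (((measurable_measure_prodMk_right ((hB.prod MeasurableSet.univ).inter hK)).comp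
      huu).ennreal_toReal.mul hF).aestronglyMeasurable
  rw [step1, step2, step3]

theorem control_function_lemma
    {Ω : Type*} [MeasurableSpace Ω] [StandardBorelSpace Ω] [Nonempty Ω]
    (μ : Measure Ω) [IsProbabilityMeasure μ]
    {dx dz de : ℕ}
    (X : Ω → (Fin dx → ℝ)) (Z : Ω → (Fin dz → ℝ)) (E : Ω → (Fin de → ℝ)) (U : Ω → ℝ)
    (hX : Measurable X) (hZ : Measurable Z) (hE : Measurable E) (hU : Measurable U)
    (hindep : IndepFun (fun ω => (X ω, Z ω)) (fun ω => (E ω, U ω)) μ)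
    (hUnif : μ.map U = volume.restrict (Set.Icc (0 : ℝ) 1))
    (k : (Fin dx → ℝ) → (Fin dz → ℝ) → ℝ → ℝ)
    (hk : Measurable fun p : (Fin dx → ℝ) × (Fin dz → ℝ) × ℝ => k p.1 p.2.1 p.2.2)
    (hkmono : ∀ x z, StrictMono (k x z))
    (H : Ω → ℝ) (hH : H = fun ω => max (k (X ω) (Z ω) (U ω)) 0)
    (hpos : μ {ω | 0 < H ω} ≠ 0) :
    CondIndepFun (MeasurableSpace.comap U inferInstance) hU.comap_le
      E (fun ω => (X ω, Z ω)) (μ[|{ω | 0 < H ω}]) := by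
  classical
  -- Notation
  set P := (Fin dx → ℝ) × (Fin dz → ℝ) with hP
  set Q := (Fin de → ℝ) × ℝ with hQ
  set XZ : Ω → P := fun ω => (X ω, Z ω) with hXZdef
  set EU : Ω → Q := fun ω => (E ω, U ω) with hEUdef
  have hXZ : Measurable XZ := hX.prodMk hZ
  have hEU : Measurable EU := hE.prodMk hU
  set K : Set (P × ℝ) := {r | 0 < k r.1.1 r.1.2 r.2} with hKdef
  have hKmeas : MeasurableSet K := by
    have : Measurable fun r : P × ℝ => k r.1.1 r.1.2 r.2 :=
      hk.comp ((measurable_fst.comp measurable_fst).prodMk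
        ((measurable_snd.comp measurable_fst).prodMk measurable_snd))
    exact measurableSet_lt measurable_const this
  set S : Set Ω := {ω | 0 < H ω} with hSdef
  have hSK : ∀ ω, ω ∈ S ↔ (XZ ω, U ω) ∈ K := by
    intro ω
    simp only [hSdef, hH, Set.mem_setOf_eq, hKdef, hXZdef, lt_max_iff, lt_irrefl, or_false]
  have hSmeas : MeasurableSet S := by
    have : S = (fun ω => (XZ ω, U ω)) ⁻¹' K := Set.ext fun ω => hSK ω
    rw [this]
    exact (hXZ.prodMk hU) hKmeas
  have hm : MeasurableSpace.comap U inferInstance ≤ ‹MeasurableSpace Ω› := hU.comap_le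
  have hUm : Measurable[MeasurableSpace.comap U inferInstance] U := fun s hs => ⟨s, hs, rfl⟩
  set μ' : Measure Ω := μ[|S] with hμ'def
  haveI hμ'prob : IsProbabilityMeasure μ' := cond_isProbabilityMeasure hpos
  haveI : SigmaFinite (μ'.trim hm) := by infer_instance
  -- the weight functions
  set ν : Measure P := μ.map XZ with hνdef
  haveI hνprob : IsProbabilityMeasure ν := Measure.isProbabilityMeasure_map hXZ.aemeasurable
  set w : Set P → ℝ → ENNReal := fun B u => ν ((fun p => (p, u)) ⁻¹' ((B ×ˢ Set.univ) ∩ K))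
    with hwdef
  set g : Set P → ℝ → ℝ := fun B u => (w B u).toReal / (w Set.univ u).toReal with hgdef
  have hwle : ∀ B u, w B u ≤ w Set.univ u := by
    intro B u
    refine measure_mono (Set.preimage_mono (Set.inter_subset_inter_left _ ?_))
    exact Set.prod_mono (Set.subset_univ _) le_rfl
  have hwfin : ∀ B u, w B u ≠ ⊤ := fun B u => measure_ne_top _ _
  have hgmul : ∀ B u, g B u * (w Set.univ u).toReal = (w B u).toReal := by
    intro B u
    by_cases h0 : w Set.univ u = 0
    · have hB0 : w B u = 0 := le_antisymm ((hwle B u).trans h0.le) zero_le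
      simp [hgdef, h0, hB0]
    · have : (w Set.univ u).toReal ≠ 0 :=
        ENNReal.toReal_ne_zero.mpr ⟨h0, hwfin _ _⟩
      exact div_mul_cancel₀ _ this
  have hgnonneg : ∀ B u, 0 ≤ g B u := fun B u =>
    div_nonneg ENNReal.toReal_nonneg ENNReal.toReal_nonneg
  have hgbound : ∀ B u, ‖g B u‖ ≤ 1 := by
    intro B u
    rw [Real.norm_eq_abs, abs_of_nonneg (hgnonneg B u)]
    exact div_le_one_of_le₀ (ENNReal.toReal_mono (hwfin _ _) (hwle B u)) ENNReal.toReal_nonneg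
  have hwmeas : ∀ B : Set P, MeasurableSet B → Measurable (w B) := by
    intro B hB
    exact measurable_measure_prodMk_right ((hB.prod MeasurableSet.univ).inter hKmeas)
  have hgmeas : ∀ B : Set P, MeasurableSet B → Measurable (g B) := by
    intro B hB
    exact ((hwmeas B hB).ennreal_toReal).div ((hwmeas _ MeasurableSet.univ).ennreal_toReal)
  -- the independence as a product-measure statement
  have hmap : μ.map (fun ω => (XZ ω, EU ω)) = (μ.map XZ).prod (μ.map EU) :=
    (indepFun_iff_map_prod_eq_prod_map_map hXZ.aemeasurable hEU.aemeasurable).mp hindep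
  -- key integral identity specialised to our situation
  have key : ∀ (B : Set P), MeasurableSet B → ∀ F : Q → ℝ, Measurable F →
      (∀ q, ‖F q‖ ≤ 1) →
      ∫ ω, B.indicator 1 (XZ ω) * K.indicator 1 (XZ ω, U ω) * F (EU ω) ∂μ
        = ∫ ω, (w B (U ω)).toReal * F (EU ω) ∂μ := by
    intro B hB F hF hFb
    have := key_int μ XZ EU hXZ hEU hmap K hKmeas Prod.snd measurable_snd B hB F hF hFb
    simpa [hwdef, hνdef] using this
  -- reduction of integrals over μ' to integrals over μ
  have hred : ∀ f : Ω → ℝ, ∫ x, f x ∂μ' = ((μ S)⁻¹).toReal * ∫ ω, S.indicator f ω ∂μ := by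
    intro f
    rw [hμ'def, ProbabilityTheory.cond, integral_smul_measure, integral_indicator hSmeas,
      smul_eq_mul]
  -- candidate conditional expectations: claim 1
  have claim1 : ∀ B : Set P, MeasurableSet B →
      (fun ω => g B (U ω)) =ᵐ[μ']
        μ'[Set.indicator (XZ ⁻¹' B) (fun _ => (1:ℝ)) | MeasurableSpace.comap U inferInstance] := by
    intro B hB
    refine ae_eq_condExp_of_forall_setIntegral_eq hm
      ((integrable_const (1:ℝ)).indicator (hXZ hB)) (fun s hs hμs => ?_) (fun C hC hμC => ?_) ?_
    · exact (Integrable.integrableOn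
        ⟨((hgmeas B hB).comp hU).aestronglyMeasurable,
          HasFiniteIntegral.of_bounded (C := 1)
            (Filter.Eventually.of_forall (fun ω => hgbound B (U ω)))⟩)
    · obtain ⟨c, hc, rfl⟩ := MeasurableSpace.measurableSet_comap.mp hC
      rw [← integral_indicator (hU hc), ← integral_indicator (hU hc), hred, hred]
      congr 1
      set F1 : Q → ℝ := fun q => c.indicator 1 q.2 * g B q.2 with hF1
      set F2 : Q → ℝ := fun q => c.indicator 1 q.2 with hF2
      have e1 : (S.indicator ((U ⁻¹' c).indicator fun ω => g B (U ω)))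
          = fun ω => Set.univ.indicator 1 (XZ ω) * K.indicator 1 (XZ ω, U ω) * F1 (EU ω) := by
        funext ω
        by_cases h1 : (XZ ω, U ω) ∈ K <;> by_cases h2 : U ω ∈ c <;>
          simp [Set.indicator_apply, hSK ω, h1, h2, hF1, hEUdef]
      have e2 : (S.indicator ((U ⁻¹' c).indicator
            (Set.indicator (XZ ⁻¹' B) (fun _ => (1:ℝ)))))
          = fun ω => B.indicator 1 (XZ ω) * K.indicator 1 (XZ ω, U ω) * F2 (EU ω) := by
        funext ω
        by_cases h1 : (XZ ω, U ω) ∈ K <;> by_cases h2 : U ω ∈ c <;> by_cases h3 : XZ ω ∈ B <;>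
          simp [Set.indicator_apply, hSK ω, h1, h2, h3, hF2, hEUdef]
      have hF1m : Measurable F1 :=
        ((measurable_one.indicator hc).comp measurable_snd).mul
          ((hgmeas B hB).comp measurable_snd)
      have hF1b : ∀ q, ‖F1 q‖ ≤ 1 := by
        intro q
        rw [hF1]
        calc ‖c.indicator 1 q.2 * g B q.2‖ ≤ ‖c.indicator (1 : ℝ → ℝ) q.2‖ * ‖g B q.2‖ :=
              norm_mul_le _ _
          _ ≤ 1 * 1 := by
              refine mul_le_mul ?_ (hgbound B q.2) (norm_nonneg _) zero_le_one
              by_cases h : q.2 ∈ c <;> simp [Set.indicator_apply, h]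
          _ = 1 := one_mul 1
      have hF2m : Measurable F2 := (measurable_one.indicator hc).comp measurable_snd
      have hF2b : ∀ q, ‖F2 q‖ ≤ 1 := by
        intro q
        rw [hF2]
        by_cases h : q.2 ∈ c <;> simp [Set.indicator_apply, h]
      rw [e1, e2, key Set.univ MeasurableSet.univ F1 hF1m hF1b, key B hB F2 hF2m hF2b]
      congr 1
      funext ω
      rw [hF1, hF2]
      simp only
      rw [mul_comm (c.indicator 1 (EU ω).2) (g B (EU ω).2), ← mul_assoc, mul_comm _ (g B (EU ω).2),
        mul_assoc, mul_comm ((w Set.univ (U ω)).toReal) _, ← mul_assoc, hEUdef]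
      simp only
      rw [mul_comm (g B (U ω)) _, mul_assoc, hgmul B (U ω), mul_comm]
    · exact ((hgmeas B hB).comp hUm).stronglyMeasurable.aestronglyMeasurable
  -- claim 2 : the joint conditional expectation factorises
  have claim2 : ∀ (A : Set (Fin de → ℝ)) (B : Set P), MeasurableSet A → MeasurableSet B →
      (fun ω => g B (U ω) *
          (μ'[Set.indicator (E ⁻¹' A) (fun _ => (1:ℝ)) |
            MeasurableSpace.comap U inferInstance]) ω) =ᵐ[μ']
        μ'[Set.indicator (E ⁻¹' A ∩ XZ ⁻¹' B) (fun _ => (1:ℝ)) |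
          MeasurableSpace.comap U inferInstance] := by
    intro A B hA hB
    have hfA_int : Integrable (Set.indicator (E ⁻¹' A) (fun _ => (1:ℝ))) μ' :=
      (integrable_const (1:ℝ)).indicator (hE hA)
    refine ae_eq_condExp_of_forall_setIntegral_eq hm
      ((integrable_const (1:ℝ)).indicator ((hE hA).inter (hXZ hB)))
      (fun s hs hμs => ?_) (fun C hC hμC => ?_) ?_
    · refine Integrable.integrableOn (Integrable.bdd_mul integrable_condExp
        (((hgmeas B hB).comp hU).aestronglyMeasurable) (c := 1) (Filter.Eventually.of_forall fun ω => hgbound B (U ω)))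
    · obtain ⟨c, hc, rfl⟩ := MeasurableSpace.measurableSet_comap.mp hC
      set φ : Ω → ℝ := fun ω => c.indicator 1 (U ω) * g B (U ω) with hφdef
      have hφm : StronglyMeasurable[MeasurableSpace.comap U inferInstance] φ :=
        (((measurable_one.indicator hc).comp hUm).mul
          ((hgmeas B hB).comp hUm)).stronglyMeasurable
      have hφb : ∀ ω, ‖φ ω‖ ≤ 1 := by
        intro ω
        rw [hφdef]
        calc ‖c.indicator 1 (U ω) * g B (U ω)‖
            ≤ ‖c.indicator (1 : ℝ → ℝ) (U ω)‖ * ‖g B (U ω)‖ := norm_mul_le _ _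
          _ ≤ 1 * 1 := by
              refine mul_le_mul ?_ (hgbound B (U ω)) (norm_nonneg _) zero_le_one
              by_cases h : U ω ∈ c <;> simp [Set.indicator_apply, h]
          _ = 1 := one_mul 1
      -- step 1 : rewrite the set integral as a full integral against φ
      have step1 : ∫ x in U ⁻¹' c, g B (U x) *
            (μ'[Set.indicator (E ⁻¹' A) (fun _ => (1:ℝ)) |
              MeasurableSpace.comap U inferInstance]) x ∂μ'
          = ∫ x, φ x * (μ'[Set.indicator (E ⁻¹' A) (fun _ => (1:ℝ)) |
              MeasurableSpace.comap U inferInstance]) x ∂μ' := by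
        rw [← integral_indicator (hU hc)]
        congr 1
        funext ω
        by_cases h2 : U ω ∈ c <;> simp [Set.indicator_apply, h2, hφdef]
      -- step 2 : pull φ inside the conditional expectation
      have hpull := condExp_stronglyMeasurable_mul_of_bound hm hφm hfA_int 1
        (Filter.Eventually.of_forall hφb)
      have hφfA_int : Integrable (φ * Set.indicator (E ⁻¹' A) (fun _ => (1:ℝ))) μ' := by
        refine Integrable.bdd_mul hfA_int (hφm.mono hm).aestronglyMeasurable (c := 1) (Filter.Eventually.of_forall hφb)
      have step2 : ∫ x, φ x * (μ'[Set.indicator (E ⁻¹' A) (fun _ => (1:ℝ)) |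
              MeasurableSpace.comap U inferInstance]) x ∂μ'
          = ∫ x, φ x * Set.indicator (E ⁻¹' A) (fun _ => (1:ℝ)) x ∂μ' := by
        have h1 : ∫ x, φ x * (μ'[Set.indicator (E ⁻¹' A) (fun _ => (1:ℝ)) |
              MeasurableSpace.comap U inferInstance]) x ∂μ'
            = ∫ x, (μ'[φ * Set.indicator (E ⁻¹' A) (fun _ => (1:ℝ)) |
              MeasurableSpace.comap U inferInstance]) x ∂μ' := by
          refine (integral_congr_ae ?_).symm
          filter_upwards [hpull] with x hx
          rw [hx]
          rfl
        rw [h1, integral_condExp hm]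
        rfl
      rw [step1, step2, ← integral_indicator (hU hc), hred, hred]
      congr 1
      set F1 : Q → ℝ := fun q => c.indicator 1 q.2 * g B q.2 * A.indicator 1 q.1 with hF1
      set F2 : Q → ℝ := fun q => c.indicator 1 q.2 * A.indicator 1 q.1 with hF2
      have e1 : (S.indicator fun x => φ x * Set.indicator (E ⁻¹' A) (fun _ => (1:ℝ)) x)
          = fun ω => Set.univ.indicator 1 (XZ ω) * K.indicator 1 (XZ ω, U ω) * F1 (EU ω) := by
        funext ω
        by_cases h1 : (XZ ω, U ω) ∈ K <;> by_cases h2 : U ω ∈ c <;> by_cases h3 : E ω ∈ A <;>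
          simp [Set.indicator_apply, hSK ω, h1, h2, h3, hφdef, hF1, hEUdef]
      have e2 : (S.indicator ((U ⁻¹' c).indicator
            (Set.indicator (E ⁻¹' A ∩ XZ ⁻¹' B) (fun _ => (1:ℝ)))))
          = fun ω => B.indicator 1 (XZ ω) * K.indicator 1 (XZ ω, U ω) * F2 (EU ω) := by
        funext ω
        by_cases h1 : (XZ ω, U ω) ∈ K <;> by_cases h2 : U ω ∈ c <;> by_cases h3 : E ω ∈ A <;>
          by_cases h4 : XZ ω ∈ B <;>
          simp [Set.indicator_apply, hSK ω, h1, h2, h3, h4, hF2, hEUdef]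
      have hF1m : Measurable F1 :=
        (((measurable_one.indicator hc).comp measurable_snd).mul
          ((hgmeas B hB).comp measurable_snd)).mul
          ((measurable_one.indicator hA).comp measurable_fst)
      have hF1b : ∀ q, ‖F1 q‖ ≤ 1 := by
        intro q
        rw [hF1]
        have hcb : ‖c.indicator (1 : ℝ → ℝ) q.2‖ ≤ 1 := by
          by_cases h : q.2 ∈ c <;> simp [Set.indicator_apply, h]
        have hab : ‖A.indicator (1 : (Fin de → ℝ) → ℝ) q.1‖ ≤ 1 := by
          by_cases h : q.1 ∈ A <;> simp [Set.indicator_apply, h]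
        calc ‖c.indicator 1 q.2 * g B q.2 * A.indicator 1 q.1‖
            ≤ ‖c.indicator 1 q.2 * g B q.2‖ * ‖A.indicator (1 : (Fin de → ℝ) → ℝ) q.1‖ :=
              norm_mul_le _ _
          _ ≤ 1 * 1 := by
              refine mul_le_mul ?_ hab (norm_nonneg _) zero_le_one
              calc ‖c.indicator 1 q.2 * g B q.2‖
                  ≤ ‖c.indicator (1 : ℝ → ℝ) q.2‖ * ‖g B q.2‖ := norm_mul_le _ _
                _ ≤ 1 * 1 := mul_le_mul hcb (hgbound B q.2) (norm_nonneg _) zero_le_one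
                _ = 1 := one_mul 1
          _ = 1 := one_mul 1
      have hF2m : Measurable F2 :=
        ((measurable_one.indicator hc).comp measurable_snd).mul
          ((measurable_one.indicator hA).comp measurable_fst)
      have hF2b : ∀ q, ‖F2 q‖ ≤ 1 := by
        intro q
        rw [hF2]
        have hcb : ‖c.indicator (1 : ℝ → ℝ) q.2‖ ≤ 1 := by
          by_cases h : q.2 ∈ c <;> simp [Set.indicator_apply, h]
        have hab : ‖A.indicator (1 : (Fin de → ℝ) → ℝ) q.1‖ ≤ 1 := by
          by_cases h : q.1 ∈ A <;> simp [Set.indicator_apply, h]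
        calc ‖c.indicator 1 q.2 * A.indicator 1 q.1‖
            ≤ ‖c.indicator (1 : ℝ → ℝ) q.2‖ * ‖A.indicator (1 : (Fin de → ℝ) → ℝ) q.1‖ :=
              norm_mul_le _ _
          _ ≤ 1 * 1 := mul_le_mul hcb hab (norm_nonneg _) zero_le_one
          _ = 1 := one_mul 1
      rw [e1, e2, key Set.univ MeasurableSet.univ F1 hF1m hF1b, key B hB F2 hF2m hF2b]
      congr 1
      funext ω
      rw [hF1, hF2]
      simp only [hEUdef]
      have : (w Set.univ (U ω)).toReal * (c.indicator 1 (U ω) * g B (U ω) * A.indicator 1 (E ω))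
          = (g B (U ω) * (w Set.univ (U ω)).toReal) *
            (c.indicator 1 (U ω) * A.indicator 1 (E ω)) := by ring
      rw [this, hgmul B (U ω)]
    · exact (((hgmeas B hB).comp hUm).stronglyMeasurable.mul
        stronglyMeasurable_condExp).aestronglyMeasurable
  -- final assembly
  rw [condIndepFun_iff_condExp_inter_preimage_eq_mul hE hXZ]
  intro A B hA hB
  have h2 := (claim2 A B hA hB).symm
  have h1 := claim1 B hB
  filter_upwards [h2, h1] with ω e2 e1
  rw [e2, e1, mul_comm]
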